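/- arXiv:2208.10456 — 6 statements merged into one kernel-verified Lean document; each statement's English description precedes it below -/
import Mathlib

section
/- Bounded monotonicity is compositional with respect to sequential composition: let (Σ, ⊕, u) be a partial commutative monoid, let ver₁, ver₂ : Σ → Prop and sem₁, sem₂ : Σ → Set Σ, and define the sequential composition by ver(φ) iff ver₁(φ) and ver₂(a) for every a ∈ sem₁(φ), and sem(φ) := ⋃_{a ∈ sem₁(φ)} sem₂(a). Let sem̄₁(T) := ⋃ {sem₁(φ) | ver₁(φ) and φ' ⪰ φ for some φ' ∈ T}. If mono(T) holds for (ver₁, sem₁) and mono(sem̄₁(T)) holds for (ver₂, sem₂), then mono(T) holds for the sequential composition (ver, sem). -/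
/-- A partial commutative monoid: `op` is a partial (Option-valued), commutative,
associative binary operation with neutral element `unit`. The `Option.bind`
formulation of associativity also entails that whenever a sum is defined,
so are all of its subsums. -/
structure PCM (S : Type*) where
  op : S → S → Option S
  unit : S
  comm : ∀ a b, op a b = op b a
  assoc : ∀ a b c, (op a b).bind (fun ab => op ab c) = (op b c).bind (fun bc => op a bc)
  unit_op : ∀ a, op unit a = some a

namespace PCM

variable {S : Type*} (P : PCM S)

/-- `φ # φ'`: the sum is defined. -/
def compat (a b : S) : Prop := (P.op a b).isSome

/-- `b ⪰ a` : `b = a ⊕ c` for some `c`. -/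
def succ (b a : S) : Prop := ∃ c, P.op a c = some b

/-- `p` is pure iff `p # p` and `p = p ⊕ p`. -/
def pure (p : S) : Prop := P.op p p = some p

/-- Lifted addition on sets of states. -/
def setOp (T U : Set S) : Set S := {x | ∃ a ∈ T, ∃ b ∈ U, P.op a b = some x}

/-- Lifted order on sets of states: every element of `T` dominates some element of `U`. -/
def setSucc (T U : Set S) : Prop := ∀ a ∈ T, ∃ b ∈ U, P.succ a b

/-- Bounded (safety and output) monotonicity for a verifier `(ver, sem)` with
resource bound `T`. -/
def mono (ver : S → Prop) (sem : S → Set S) (T : Set S) : Prop :=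
  ∀ φ₁ φ₂ : S, (∃ φ₃ ∈ T, P.succ φ₃ φ₂) → P.succ φ₂ φ₁ → ver φ₁ →
    ver φ₂ ∧ P.setSucc (sem φ₂) (sem φ₁)

/-- Bounded framing for a verifier `(ver, sem)` with resource bound `T`. -/
def framing (ver : S → Prop) (sem : S → Set S) (T : Set S) : Prop :=
  ∀ φ r φr : S, P.op φ r = some φr → (∃ φ' ∈ T, P.succ φ' φr) → ver φ →
    ver φr ∧ P.setSucc (sem φr) (P.setOp (sem φ) {r})

end PCM

/-- Bounded monotonicity is compositional with respect to sequential composition. -/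
theorem mono_seq {S : Type*} (P : PCM S) (ver₁ ver₂ : S → Prop) (sem₁ sem₂ : S → Set S)
    (T : Set S)
    (h₁ : P.mono ver₁ sem₁ T)
    (h₂ : P.mono ver₂ sem₂ {x | ∃ φ : S, ver₁ φ ∧ (∃ φ' ∈ T, P.succ φ' φ) ∧ x ∈ sem₁ φ}) :
    P.mono (fun φ => ver₁ φ ∧ ∀ a ∈ sem₁ φ, ver₂ a)
      (fun φ => ⋃ a ∈ sem₁ φ, sem₂ a) T := by
  intro φ₁ φ₂ hT h21 hv
  obtain ⟨hv1, hv2⟩ := hv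
  obtain ⟨hver2, hsucc⟩ := h₁ φ₁ φ₂ hT h21 hv1
  have key : ∀ a ∈ sem₁ φ₂, ∃ b ∈ sem₁ φ₁, ver₂ a ∧ P.setSucc (sem₂ a) (sem₂ b) := by
    intro a ha
    obtain ⟨b, hb, hab⟩ := hsucc a ha
    have haB : a ∈ {x | ∃ φ : S, ver₁ φ ∧ (∃ φ' ∈ T, P.succ φ' φ) ∧ x ∈ sem₁ φ} :=
      ⟨φ₂, hver2, hT, ha⟩
    have haa : P.succ a a := ⟨P.unit, by rw [P.comm]; exact P.unit_op a⟩
    obtain ⟨hva, hsa⟩ := h₂ b a ⟨a, haB, haa⟩ hab (hv2 b hb)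
    exact ⟨b, hb, hva, hsa⟩
  refine ⟨⟨hver2, fun a ha => (key a ha).choose_spec.2.1⟩, ?_⟩
  intro x hx
  simp only [Set.mem_iUnion] at hx
  obtain ⟨a, ha, hxa⟩ := hx
  obtain ⟨b, hb, _, hsa⟩ := key a ha
  obtain ⟨y, hy, hxy⟩ := hsa x hxa
  exact ⟨y, Set.mem_iUnion₂.mpr ⟨b, hb, hy⟩, hxy⟩
end

section
/- Bounded framing is compositional with respect to sequential composition: let (Σ, ⊕, u) be a partial commutative monoid, let ver₁, ver₂ : Σ → Prop and sem₁, sem₂ : Σ → Set Σ, and define the sequential composition by ver(φ) iff ver₁(φ) and ver₂(a) for every a ∈ sem₁(φ), and sem(φ) := ⋃_{a ∈ sem₁(φ)} sem₂(a). Let sem̄₁(T) := ⋃ {sem₁(φ) | ver₁(φ) and φ' ⪰ φ for some φ' ∈ T}. If framing(T) holds for (ver₁, sem₁) and framing(sem̄₁(T)) holds for (ver₂, sem₂), then framing(T) holds for the sequential composition (ver, sem). -/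
/-- Bounded framing is compositional with respect to sequential composition. -/
theorem framing_seq {S : Type*} (P : PCM S) (ver₁ ver₂ : S → Prop) (sem₁ sem₂ : S → Set S)
    (T : Set S)
    (h₁ : P.framing ver₁ sem₁ T)
    (h₂ : P.framing ver₂ sem₂ {x | ∃ φ : S, ver₁ φ ∧ (∃ φ' ∈ T, P.succ φ' φ) ∧ x ∈ sem₁ φ}) :
    P.framing (fun φ => ver₁ φ ∧ ∀ a ∈ sem₁ φ, ver₂ a)
      (fun φ => ⋃ a ∈ sem₁ φ, sem₂ a) T := by
  intro φ r φr hop hbound hver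
  obtain ⟨hver₁, hver₂⟩ := hver
  obtain ⟨hver₁r, hsucc₁⟩ := h₁ φ r φr hop hbound hver₁
  -- key fact for each a ∈ sem₁ φr
  have key : ∀ a ∈ sem₁ φr, ∃ s ∈ sem₁ φ, ∃ c rc : S,
      P.op r c = some rc ∧ P.op s rc = some a ∧
      ver₂ a ∧ P.setSucc (sem₂ a) (P.setOp (sem₂ s) {rc}) := by
    intro a ha
    obtain ⟨b, ⟨s, hs, r', hr', hsr⟩, c, hbc⟩ := hsucc₁ a ha
    rw [Set.mem_singleton_iff] at hr'
    rw [hr'] at hsr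
    have hassoc := P.assoc s r c
    rw [hsr] at hassoc
    simp only [Option.bind_some, hbc] at hassoc
    obtain ⟨rc, hrc, hsrc⟩ : ∃ rc, P.op r c = some rc ∧ P.op s rc = some a := by
      cases h : P.op r c with
      | none => rw [h] at hassoc; simp at hassoc
      | some rc => rw [h] at hassoc; exact ⟨rc, rfl, hassoc.symm⟩
    have hb2 : (∃ φ' ∈ {x | ∃ φ : S, ver₁ φ ∧ (∃ φ' ∈ T, P.succ φ' φ) ∧ x ∈ sem₁ φ},
        P.succ φ' a) := by
      refine ⟨a, ⟨φr, hver₁r, hbound, ha⟩, P.unit, ?_⟩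
      rw [P.comm]; exact P.unit_op a
    obtain ⟨hva, hss⟩ := h₂ s rc a hsrc hb2 (hver₂ s hs)
    exact ⟨s, hs, c, rc, hrc, hsrc, hva, hss⟩
  constructor
  · exact ⟨hver₁r, fun a ha => (key a ha).choose_spec.2.choose_spec.choose_spec.2.2.1⟩
  · intro x hx
    simp only [Set.mem_iUnion] at hx
    obtain ⟨a, ha, hxa⟩ := hx
    obtain ⟨s, hs, c, rc, hrc, hsrc, _, hss⟩ := key a ha
    obtain ⟨y, ⟨t, ht, rc', hrc', htrc⟩, d, hyd⟩ := hss x hxa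
    rw [Set.mem_singleton_iff] at hrc'
    rw [hrc'] at htrc
    -- y = t ⊕ rc, rc = r ⊕ c; get tr = t ⊕ r with y = tr ⊕ c
    have hassoc := P.assoc t r c
    rw [hrc] at hassoc
    simp only [Option.bind_some, htrc] at hassoc
    obtain ⟨tr, htr, htrc'⟩ : ∃ tr, P.op t r = some tr ∧ P.op tr c = some y := by
      cases h : P.op t r with
      | none => rw [h] at hassoc; simp at hassoc
      | some tr => rw [h] at hassoc; exact ⟨tr, rfl, hassoc⟩
    -- x = y ⊕ d = (tr ⊕ c) ⊕ d = tr ⊕ (c ⊕ d)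
    have hassoc2 := P.assoc tr c d
    rw [htrc'] at hassoc2
    simp only [Option.bind_some, hyd] at hassoc2
    obtain ⟨cd, hcd⟩ : ∃ cd, P.op tr cd = some x := by
      cases h : P.op c d with
      | none => rw [h] at hassoc2; simp at hassoc2
      | some cd => rw [h] at hassoc2; exact ⟨cd, hassoc2.symm⟩
    refine ⟨tr, ⟨t, ?_, r, rfl, htr⟩, cd, hcd⟩
    simp only [Set.mem_iUnion]
    exact ⟨s, hs, ht⟩
end

section
/- Existence of the core: let (Σ, ⊕, u) be a partial commutative monoid in which, for every state φ, the set {p ∈ Σ | p is pure and φ ⪰ p} is finite. Then every state φ has a maximum pure part: there exists a pure state |φ| with φ ⪰ |φ| such that |φ| ⪰ p for every pure state p with φ ⪰ p. -/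
section Aux

variable {S : Type*} (P : PCM S)

lemma PCM.succ_trans {a b c : S} (hba : P.succ b a) (hcb : P.succ c b) : P.succ c a := by
  obtain ⟨x, hx⟩ := hba
  obtain ⟨y, hy⟩ := hcb
  have h := P.assoc a x y
  rw [hx] at h
  simp only [Option.bind_some] at h
  rw [hy] at h
  obtain ⟨z, hz, haz⟩ := Option.bind_eq_some_iff.mp h.symm
  exact ⟨z, haz⟩

lemma PCM.pure_absorb {p φ : S} (hp : P.pure p) (h : P.succ φ p) :
    P.op p φ = some φ := by
  obtain ⟨a, ha⟩ := h
  have h := P.assoc p p a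
  rw [hp] at h
  simp only [Option.bind_some] at h
  rw [ha] at h
  simpa using h.symm

lemma PCM.pure_join {p q φ : S} (hp : P.pure p) (hq : P.pure q)
    (hφp : P.succ φ p) (hφq : P.succ φ q) :
    ∃ r, P.op p q = some r ∧ P.pure r ∧ P.succ φ r ∧ P.succ r p ∧ P.succ r q := by
  have hpφ := P.pure_absorb hp hφp
  have hqφ := P.pure_absorb hq hφq
  -- op p q is defined
  have h1 := P.assoc p q φ
  rw [hqφ] at h1
  simp only [Option.bind_some, hpφ] at h1
  obtain ⟨r, hpq, hrφ⟩ := Option.bind_eq_some_iff.mp h1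
  refine ⟨r, hpq, ?_, ⟨φ, hrφ⟩, ⟨q, hpq⟩, ⟨p, by rw [P.comm]; exact hpq⟩⟩
  -- op p r = some r
  have hpr : P.op p r = some r := by
    have h2 := P.assoc p p q
    rw [hp] at h2
    simp only [Option.bind_some, hpq] at h2
    exact h2.symm
  -- op q r = some r
  have hqr : P.op q r = some r := by
    have h3 := P.assoc q q p
    rw [hq] at h3
    simp only [Option.bind_some] at h3
    rw [P.comm q p, hpq] at h3
    exact h3.symm
  -- op r r = some r
  have h4 := P.assoc p q r
  rw [hpq, hqr] at h4
  simp only [Option.bind_some, hpr] at h4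
  exact h4

end Aux

/-- Existence of the core: if for every state the set of pure states below it is finite,
then every state has a maximum pure part. -/
theorem core_exists {S : Type*} (P : PCM S)
    (hfin : ∀ φ : S, {p : S | P.pure p ∧ P.succ φ p}.Finite) :
    ∀ φ : S, ∃ c : S, P.pure c ∧ P.succ φ c ∧
      ∀ p : S, P.pure p → P.succ φ p → P.succ c p := by
  classical
  intro φ
  have key : ∀ t : Finset S, (∀ p ∈ t, P.pure p ∧ P.succ φ p) →
      ∃ c, P.pure c ∧ P.succ φ c ∧ ∀ p ∈ t, P.succ c p := by
    intro t
    induction t using Finset.induction_on with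
    | empty =>
      intro _
      refine ⟨P.unit, by simpa [PCM.pure] using P.unit_op P.unit, ⟨φ, P.unit_op φ⟩, by simp⟩
    | insert _ _ hnot ih =>
      rename_i a s
      intro hmem
      obtain ⟨c, hcpure, hφc, hc⟩ := ih fun p hp => hmem p (Finset.mem_insert_of_mem hp)
      obtain ⟨hapure, hφa⟩ := hmem a (Finset.mem_insert_self a s)
      obtain ⟨r, _, hrpure, hφr, hrc, hra⟩ := P.pure_join hcpure hapure hφc hφa
      refine ⟨r, hrpure, hφr, ?_⟩
      intro p hp
      rcases Finset.mem_insert.mp hp with rfl | hp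
      · exact hra
      · exact P.succ_trans (hc p hp) hrc
  obtain ⟨c, hcpure, hφc, hc⟩ := key (hfin φ).toFinset
    (fun p hp => (hfin φ).mem_toFinset.mp hp)
  exact ⟨c, hcpure, hφc, fun p hp hφp => hc p ((hfin φ).mem_toFinset.mpr ⟨hp, hφp⟩)⟩
end

section
/- Characterization of monotonic assume statements: let (Σ, ⊕, u) be a partial commutative monoid and b an assertion. The following are equivalent: (1) for every set U ⊆ Σ, both mono(U) for the statement assume b and mono(U) for the statement assume ¬b hold; (2) for all states φ, φ' with φ' ⪰ φ and b(φ) ≠ Error, one has b(φ') = b(φ). -/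
/-- An assertion is a function `S → Option Bool`: `some true` is ⊤, `some false` is ⊥,
and `none` is Error. -/
def negAssertion {S : Type*} (b : S → Option Bool) : S → Option Bool :=
  fun φ => (b φ).map (fun v => !v)

/-- Verification of `assume b`: the assertion must be well-defined. -/
def assumeVer {S : Type*} (b : S → Option Bool) (φ : S) : Prop := b φ ≠ none

/-- Semantics of `assume b`: `{φ}` if `b` holds, `∅` if `b` is false. -/
def assumeSem {S : Type*} (b : S → Option Bool) (φ : S) : Set S :=
  if b φ = some true then {φ} else ∅

lemma succ_refl {S : Type*} (P : PCM S) (a : S) : P.succ a a :=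
  ⟨P.unit, by rw [P.comm]; exact P.unit_op a⟩

lemma mono_of_pres {S : Type*} (P : PCM S) (b : S → Option Bool)
    (h : ∀ φ φ' : S, P.succ φ' φ → b φ ≠ none → b φ' = b φ) (U : Set S) :
    P.mono (assumeVer b) (assumeSem b) U := by
  intro φ₁ φ₂ _ h21 hv
  have hb : b φ₂ = b φ₁ := h φ₁ φ₂ h21 hv
  refine ⟨by simp [assumeVer, hb]; exact hv, ?_⟩
  intro a ha
  simp only [assumeSem, hb] at ha ⊢
  by_cases ht : b φ₁ = some true
  · simp only [ht, if_true, Set.mem_singleton_iff] at ha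
    subst ha
    exact ⟨φ₁, by simp [ht], h21⟩
  · simp [ht] at ha

/-- Characterization of monotonic assume statements: `assume b` and `assume ¬b` are
bounded monotonic for every resource bound iff the value of `b`, when well-defined,
is preserved by growing the state. -/
theorem assume_mono_characterization {S : Type*} (P : PCM S) (b : S → Option Bool) :
    (∀ U : Set S, P.mono (assumeVer b) (assumeSem b) U ∧
      P.mono (assumeVer (negAssertion b)) (assumeSem (negAssertion b)) U) ↔
    (∀ φ φ' : S, P.succ φ' φ → b φ ≠ none → b φ' = b φ) := by
  constructor
  · intro hmono φ φ' hsucc hne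
    obtain ⟨hm, hmn⟩ := hmono {φ'}
    have h1 := hm φ φ' ⟨φ', rfl, succ_refl P φ'⟩ hsucc hne
    have hne' : negAssertion b φ ≠ none := by
      simp [negAssertion]; exact hne
    have h2 := hmn φ φ' ⟨φ', rfl, succ_refl P φ'⟩ hsucc hne'
    have hv' : b φ' ≠ none := h1.1
    match h : b φ, h' : b φ' with
    | none, _ => exact absurd h hne
    | _, none => exact absurd h' hv'
    | some true, some true => rfl
    | some false, some false => rfl
    | some true, some false =>
      -- use neg mono: sem(neg, φ) = ∅, sem(neg, φ') = {φ'}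
      exfalso
      have := h2.2 φ' (by simp [assumeSem, negAssertion, h'])
      obtain ⟨x, hx, -⟩ := this
      simp [assumeSem, negAssertion, h] at hx
    | some false, some true =>
      exfalso
      have := h1.2 φ' (by simp [assumeSem, h'])
      obtain ⟨x, hx, -⟩ := this
      simp [assumeSem, h] at hx
  · intro h U
    refine ⟨mono_of_pres P b h U, mono_of_pres P _ ?_ U⟩
    intro φ φ' hs hn
    have hbn : b φ ≠ none := by
      simp [negAssertion] at hn; exact hn
    simp [negAssertion, h φ φ' hs hbn]
end

section
/- Inhale statements with monotone well-definedness are bounded mono and bounded framing: let (Σ, ⊕, u) be a partial commutative monoid and P an assertion such that P(φ) ≠ Error and φ' ⪰ φ imply P(φ') ≠ Error. Then for every resource bound T ⊆ Σ, both mono(T) and framing(T) hold for the statement inhale P (with ver(φ) iff P(φ) ≠ Error and sem(φ) = {φ} ⊕ ⟨P⟩). -/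
/-- An assertion is a function `S → Option Bool`: `some true` is ⊤, `some false` is ⊥,
and `none` is Error; `⟨A⟩` is the set of states where it evaluates to ⊤. -/
def satStates {S : Type*} (A : S → Option Bool) : Set S := {i | A i = some true}

/-- Verification of `inhale A`: the assertion must be well-defined. -/
def inhaleVer {S : Type*} (A : S → Option Bool) (φ : S) : Prop := A φ ≠ none

/-- Semantics of `inhale A`: `{φ} ⊕ ⟨A⟩`. -/
def inhaleSem {S : Type*} (P : PCM S) (A : S → Option Bool) (φ : S) : Set S :=
  P.setOp {φ} (satStates A)

/-- Key rearrangement: if `φ ⊕ c = φ₂` and `φ₂ ⊕ a = x`, then `φ ⊕ a` is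
defined and `(φ ⊕ a) ⊕ c = x`. -/
theorem PCM.swap {S : Type*} (P : PCM S) {φ c φ₂ a x : S}
    (h1 : P.op φ c = some φ₂) (h2 : P.op φ₂ a = some x) :
    ∃ y, P.op φ a = some y ∧ P.op y c = some x := by
  have h3 := P.assoc φ c a
  rw [h1] at h3
  simp only [Option.bind_some] at h3
  rw [h2] at h3
  obtain ⟨ca, hca, hx⟩ : ∃ ca, P.op c a = some ca ∧ P.op φ ca = some x := by
    cases hop : P.op c a with
    | none => rw [hop] at h3; simp at h3
    | some ca => rw [hop] at h3; exact ⟨ca, rfl, by simpa using h3.symm⟩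
  have h4 := P.assoc φ a c
  rw [P.comm a c, hca] at h4
  simp only [Option.bind_some, hx] at h4
  cases hop : P.op φ a with
  | none => rw [hop] at h4; simp at h4
  | some y => rw [hop] at h4; exact ⟨y, rfl, by simpa using h4⟩

/-- Inhale statements whose well-definedness is monotone are bounded mono and
bounded framing for every resource bound. -/
theorem inhale_mono_and_framing {S : Type*} (P : PCM S) (A : S → Option Bool)
    (hwd : ∀ φ φ' : S, A φ ≠ none → P.succ φ' φ → A φ' ≠ none) :
    ∀ T : Set S, P.mono (inhaleVer A) (inhaleSem P A) T ∧
      P.framing (inhaleVer A) (inhaleSem P A) T := by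
  intro T
  constructor
  · intro φ₁ φ₂ _ ⟨c, hc⟩ hver
    refine ⟨hwd φ₁ φ₂ hver ⟨c, hc⟩, ?_⟩
    rintro x ⟨φ₂', hφ₂', a, ha, hx⟩
    rw [Set.mem_singleton_iff] at hφ₂'; subst hφ₂'
    obtain ⟨y, hy, hyc⟩ := P.swap hc hx
    exact ⟨y, ⟨φ₁, rfl, a, ha, hy⟩, c, hyc⟩
  · intro φ r φr hφr _ hver
    refine ⟨hwd φ φr hver ⟨r, hφr⟩, ?_⟩
    rintro x ⟨φr', hφr', a, ha, hx⟩
    rw [Set.mem_singleton_iff] at hφr'; subst hφr'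
    obtain ⟨y, hy, hyr⟩ := P.swap hφr hx
    exact ⟨x, ⟨y, ⟨φ, rfl, a, ha, hy⟩, r, rfl, hyr⟩, P.unit, by rw [P.comm, P.unit_op]⟩
end

section
/- Intuitionistic assert statements with monotone well-definedness are bounded mono and bounded framing: let (Σ, ⊕, u) be a partial commutative monoid and A an assertion such that A(φ) ≠ Error and φ' ⪰ φ imply A(φ') ≠ Error. Then for every resource bound T ⊆ Σ, both mono(T) and framing(T) hold for the statement assert A (with ver(φ) iff A(φ) ≠ Error and φ ⪰ i for some i ∈ ⟨A⟩, and sem(φ) = {φ}). -/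
/-- Verification of the intuitionistic `assert A`: the assertion must be well-defined
and hold in some state below the current one. -/
def assertVer {S : Type*} (P : PCM S) (A : S → Option Bool) (φ : S) : Prop :=
  A φ ≠ none ∧ ∃ i ∈ satStates A, P.succ φ i

/-- Semantics of `assert A`: the state is unchanged. -/
def assertSem {S : Type*} (φ : S) : Set S := {φ}

/-- Intuitionistic assert statements whose well-definedness is monotone are bounded
mono and bounded framing for every resource bound. -/
theorem assert_mono_and_framing {S : Type*} (P : PCM S) (A : S → Option Bool)
    (hwd : ∀ φ φ' : S, A φ ≠ none → P.succ φ' φ → A φ' ≠ none) :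
    ∀ T : Set S, P.mono (assertVer P A) (assertSem) T ∧
      P.framing (assertVer P A) (assertSem) T := by
  have refl : ∀ a : S, P.succ a a := fun a => ⟨P.unit, by rw [P.comm]; exact P.unit_op a⟩
  have trans : ∀ a b c : S, P.succ b a → P.succ c b → P.succ c a := by
    rintro a b c ⟨x, hx⟩ ⟨y, hy⟩
    have h := P.assoc a x y
    rw [hx] at h
    simp only [Option.bind_some] at h
    rw [hy] at h
    cases hz : P.op x y with
    | none => rw [hz] at h; simp at h
    | some z => rw [hz] at h; exact ⟨z, h.symm⟩
  intro T
  constructor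
  · rintro φ₁ φ₂ _ h21 ⟨hA1, i, hi, h1i⟩
    refine ⟨⟨hwd φ₁ φ₂ hA1 h21, i, hi, trans i φ₁ φ₂ h1i h21⟩, ?_⟩
    rintro a rfl
    exact ⟨φ₁, rfl, h21⟩
  · rintro φ r φr hop _ ⟨hA, i, hi, hφi⟩
    have hsucc : P.succ φr φ := ⟨r, hop⟩
    refine ⟨⟨hwd φ φr hA hsucc, i, hi, trans i φ φr hφi hsucc⟩, ?_⟩
    rintro a rfl
    exact ⟨a, ⟨φ, rfl, r, rfl, hop⟩, refl a⟩
end
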